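/- For all x with 0 < x < π/2, we have x > 3·sin(x)/(2 + cos(x)). -/

import Mathlib

open Real Set

lemma cusa_g_pos {x : ℝ} (h0 : 0 < x) (h1 : x ≤ π / 2) :
    0 < 2 - 2 * Real.cos x - x * Real.sin x := by
  have key : StrictMonoOn (fun x : ℝ => 2 - 2 * Real.cos x - x * Real.sin x) (Icc 0 (π / 2)) := by
    apply strictMonoOn_of_deriv_pos (convex_Icc _ _)
    · fun_prop
    · intro y hy
      rw [interior_Icc] at hy
      have hder : HasDerivAt (fun x : ℝ => 2 - 2 * Real.cos x - x * Real.sin x)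
          (Real.sin y - y * Real.cos y) y := by
        have h1 := (Real.hasDerivAt_cos y).const_mul (2 : ℝ)
        have h2 := (hasDerivAt_id y).mul (Real.hasDerivAt_sin y)
        have h3 := ((hasDerivAt_const y (2 : ℝ)).sub h1).sub h2
        convert h3 using 1
        · rfl
        · rfl
        · funext x; simp
        simp; ring
      rw [hder.deriv]
      have hc : 0 < Real.cos y := Real.cos_pos_of_mem_Ioo ⟨by linarith [hy.1], hy.2⟩
      have ht : y < Real.tan y := Real.lt_tan hy.1 hy.2
      have : y * Real.cos y < Real.tan y * Real.cos y := by
        exact mul_lt_mul_of_pos_right ht hc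
      rw [Real.tan_eq_sin_div_cos, div_mul_cancel₀ _ hc.ne'] at this
      linarith
  have := key (left_mem_Icc.mpr (by positivity)) ⟨h0.le, h1⟩ h0
  simpa using this

theorem cusa_lower_bound (x : ℝ) (h0 : 0 < x) (h1 : x < Real.pi / 2) :
    x > 3 * Real.sin x / (2 + Real.cos x) := by
  have hc : 0 < 2 + Real.cos x := by nlinarith [Real.neg_one_le_cos x]
  rw [gt_iff_lt, div_lt_iff₀ hc]
  have key : StrictMonoOn (fun x : ℝ => x * (2 + Real.cos x) - 3 * Real.sin x) (Icc 0 (π / 2)) := by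
    apply strictMonoOn_of_deriv_pos (convex_Icc _ _)
    · fun_prop
    · intro y hy
      rw [interior_Icc] at hy
      have hder : HasDerivAt (fun x : ℝ => x * (2 + Real.cos x) - 3 * Real.sin x)
          (2 - 2 * Real.cos y - y * Real.sin y) y := by
        have h1 := (hasDerivAt_id y).mul ((hasDerivAt_const y (2 : ℝ)).add (Real.hasDerivAt_cos y))
        have h2 := (Real.hasDerivAt_sin y).const_mul (3 : ℝ)
        have h3 := h1.sub h2
        convert h3 using 1
        · rfl
        · rfl
        · funext x; simp
        simp; ring
      rw [hder.deriv]
      exact cusa_g_pos hy.1 hy.2.le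
  have := key (left_mem_Icc.mpr (by positivity)) ⟨h0.le, h1.le⟩ h0
  simp only [zero_mul, Real.sin_zero, Real.cos_zero, mul_zero, sub_zero, zero_sub] at this
  linarith
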